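/- arXiv:2504.00658 — 2 statements merged into one kernel-verified Lean document; each statement's English description precedes it below -/
import Mathlib

section
/- Let λ, β ≥ 0, let Y ∈ ℂ with Re(Y) > 0, and let c₀ > 0. Then |λ + iY c₀ β| ≥ |sin(θ/2)| · min(1, |Y| c₀) · (λ + β), where θ = Arg(Y) - π/2. -/
theorem coercivity_estimate (lam beta : ℝ) (hl : 0 ≤ lam) (hb : 0 ≤ beta)
    (Y : ℂ) (hY : 0 < Y.re) (c₀ : ℝ) (hc : 0 < c₀) :
    |Real.sin ((Complex.arg Y - Real.pi / 2) / 2)| * min 1 (‖Y‖ * c₀)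
        * (lam + beta)
      ≤ ‖(lam : ℂ) + Complex.I * Y * (c₀ : ℂ) * (beta : ℂ)‖ := by
  set s := Real.sin ((Complex.arg Y - Real.pi / 2) / 2) with hsdef
  set r := ‖Y‖ with hrdef
  have hYne : Y ≠ 0 := by
    intro h; rw [h] at hY; simp at hY
  have hr : 0 < r := by simpa [hrdef] using norm_pos_iff.mpr hYne
  have hu : |Y.im| ≤ r := Complex.abs_im_le_norm Y
  have hu1 : -r ≤ Y.im := (abs_le.mp hu).1
  have hr2 : Y.re ^ 2 + Y.im ^ 2 = r ^ 2 := by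
    rw [hrdef, Complex.sq_norm, Complex.normSq_apply]; ring
  have hs2 : s ^ 2 = (1 - Y.im / r) / 2 := by
    rw [hsdef, Real.sin_sq_eq_half_sub]
    have h2 : 2 * ((Complex.arg Y - Real.pi / 2) / 2) = Complex.arg Y - Real.pi / 2 := by ring
    rw [h2]
    have hcos : Real.cos (Complex.arg Y - Real.pi / 2) = Real.sin (Complex.arg Y) := by
      rw [Real.cos_sub]; simp
    rw [hcos, Complex.sin_arg, ← hrdef]; ring
  set b := r * c₀ * beta with hbdef
  have hbnn : 0 ≤ b := by positivity
  have hz : ‖(lam : ℂ) + Complex.I * Y * (c₀ : ℂ) * (beta : ℂ)‖ ^ 2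
      = (lam - Y.im * c₀ * beta) ^ 2 + (Y.re * c₀ * beta) ^ 2 := by
    rw [Complex.sq_norm, Complex.normSq_apply]; simp; ring
  set B := ‖(lam : ℂ) + Complex.I * Y * (c₀ : ℂ) * (beta : ℂ)‖ with hBdef
  have hBnn : 0 ≤ B := norm_nonneg _
  -- key squared inequality
  have key : |s| * (lam + b) ≤ B := by
    have h1 : 0 ≤ |s| * (lam + b) := by positivity
    have h2 : (|s| * (lam + b)) ^ 2 ≤ B ^ 2 := by
      rw [hz, mul_pow, sq_abs, hs2]
      have hident : 2 * r * ((lam - Y.im * c₀ * beta) ^ 2 + (Y.re * c₀ * beta) ^ 2)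
          - (r - Y.im) * (lam + b) ^ 2 = (r + Y.im) * (lam - b) ^ 2 := by
        rw [hbdef]
        linear_combination (2 * r * c₀ ^ 2 * beta ^ 2) * hr2
      have hfact : 0 ≤ (r + Y.im) * (lam - b) ^ 2 :=
        mul_nonneg (by linarith) (sq_nonneg _)
      have hdiv : (1 - Y.im / r) / 2 = (r - Y.im) / (2 * r) := by
        rw [one_sub_div hr.ne', div_div, mul_comm r 2]
      rw [hdiv, div_mul_eq_mul_div, div_le_iff₀ (by linarith : (0:ℝ) < 2 * r)]
      nlinarith [hident, hfact]
    calc |s| * (lam + b) = Real.sqrt ((|s| * (lam + b)) ^ 2) := (Real.sqrt_sq h1).symm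
      _ ≤ Real.sqrt (B ^ 2) := Real.sqrt_le_sqrt h2
      _ = B := Real.sqrt_sq hBnn
  have hmin : min 1 (r * c₀) * (lam + beta) ≤ lam + b := by
    have h1 : min 1 (r * c₀) * lam ≤ lam := by
      nlinarith [min_le_left 1 (r * c₀)]
    have h2 : min 1 (r * c₀) * beta ≤ b := by
      rw [hbdef]; nlinarith [min_le_right 1 (r * c₀)]
    nlinarith
  calc |s| * min 1 (r * c₀) * (lam + beta) = |s| * (min 1 (r * c₀) * (lam + beta)) := by ring
    _ ≤ |s| * (lam + b) := mul_le_mul_of_nonneg_left hmin (abs_nonneg s)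
    _ ≤ B := key
end

section
/- With the notation of the previous statement, β belongs to the limit set of 𝓑_{v,r} as r → -∞ if and only if β ∈ D(0,1) ∩ [({Im > 0} \ D(1,1)) ∪ ({Im < 0} ∩ closure(D(1,1)))]. -/
/-- The constant `K²(β) = β²/(4(1-β))`. -/
noncomputable def Ksq (β : ℂ) : ℂ := β ^ 2 / (4 * (1 - β))

/-- The admissible zone for the viscosity parameter, with admittance ratio `r`. -/
def admissibleZone (r : ℝ) : Set ℂ :=
  {β | ‖β‖ < 1 ∧ (Ksq β).re - r * (Ksq β).im < 0}

lemma aux_exists_iff (a b : ℝ) :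
    (∃ R : ℝ, ∀ r : ℝ, r ≤ R → a - r * b < 0) ↔ (b < 0 ∨ (b = 0 ∧ a < 0)) := by
  constructor
  · rintro ⟨R, hR⟩
    rcases lt_trichotomy b 0 with h | h | h
    · exact Or.inl h
    · refine Or.inr ⟨h, ?_⟩
      have := hR R le_rfl
      simpa [h] using this
    · exfalso
      have hr := hR (min R (a / b)) (min_le_left _ _)
      have hle : (min R (a / b)) * b ≤ a := by
        calc (min R (a / b)) * b ≤ (a / b) * b :=
              mul_le_mul_of_nonneg_right (min_le_right _ _) h.le
        _ = a := div_mul_cancel₀ a h.ne'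
      linarith
  · rintro (h | ⟨h0, ha⟩)
    · refine ⟨(a + 1) / b, fun r hr => ?_⟩
      have h1 : ((a + 1) / b) * b = a + 1 := div_mul_cancel₀ _ h.ne
      have h2 : ((a + 1) / b) * b ≤ r * b := mul_le_mul_of_nonpos_right hr h.le
      linarith
    · exact ⟨0, fun r _ => by simp [h0, ha]⟩

lemma Ksq_im_re (β : ℂ) (h : β ≠ 1) :
    (Ksq β).im = (2 * β.re - β.re ^ 2 - β.im ^ 2) * β.im / (4 * Complex.normSq (1 - β)) ∧
    (Ksq β).re = ((β.re ^ 2 - β.im ^ 2) * (1 - β.re) - 2 * β.re * β.im ^ 2) /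
      (4 * Complex.normSq (1 - β)) := by
  have h1 : (1:ℂ) - β ≠ 0 := by simpa [sub_eq_zero] using (Ne.symm h)
  have hn0 : (4 * Complex.normSq (1 - β) : ℝ) ≠ 0 := by
    simp [Complex.normSq_eq_zero, h1]
  have hK : Ksq β = (((4 * Complex.normSq (1 - β) : ℝ) : ℂ))⁻¹ *
      (β ^ 2 * (starRingEnd ℂ) (1 - β)) := by
    rw [Ksq, div_eq_iff (by simpa [sub_eq_zero] using (Ne.symm h) : (4:ℂ) * (1 - β) ≠ 0)]
    rw [inv_mul_eq_div, div_mul_eq_mul_div, eq_div_iff (by exact_mod_cast hn0)]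
    push_cast
    rw [Complex.normSq_eq_conj_mul_self]
    ring
  rw [hK, ← Complex.ofReal_inv]
  rw [Complex.re_ofReal_mul, Complex.im_ofReal_mul]
  constructor
  · rw [inv_mul_eq_div]
    congr 1
    simp [Complex.mul_im, Complex.mul_re, pow_two, Complex.sub_re, Complex.sub_im]
    ring
  · rw [inv_mul_eq_div]
    congr 1
    simp [Complex.mul_im, Complex.mul_re, pow_two, Complex.sub_re, Complex.sub_im]
    ring

lemma real_key (x y : ℝ) (hb : x ^ 2 + y ^ 2 < 1) :
    ((2 * x - x ^ 2 - y ^ 2) * y < 0 ∨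
      ((2 * x - x ^ 2 - y ^ 2) * y = 0 ∧ (x ^ 2 - y ^ 2) * (1 - x) - 2 * x * y ^ 2 < 0)) ↔
    ((0 < y ∧ 2 * x - x ^ 2 - y ^ 2 ≤ 0) ∨ (y < 0 ∧ 0 ≤ 2 * x - x ^ 2 - y ^ 2)) := by
  set t := 2 * x - x ^ 2 - y ^ 2 with ht
  have hx1 : x < 1 := by nlinarith [sq_nonneg y, sq_nonneg (x - 1)]
  have hre_t0 : ∀ (hy : y ≠ 0) (h0 : t = 0), (x ^ 2 - y ^ 2) * (1 - x) - 2 * x * y ^ 2 < 0 := by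
    intro hy h0
    have hy2 : 0 < y ^ 2 := by positivity
    have hyx : y ^ 2 = 2 * x - x ^ 2 := by rw [ht] at h0; linarith
    nlinarith [sq_nonneg x]
  constructor
  · rintro (h | ⟨h0, hre⟩)
    · rcases mul_neg_iff.1 h with ⟨ht0, hy0⟩ | ⟨ht0, hy0⟩
      · exact Or.inr ⟨hy0, ht0.le⟩
      · exact Or.inl ⟨hy0, ht0.le⟩
    · have hy : y ≠ 0 := by
        rintro rfl
        nlinarith [sq_nonneg x]
      have ht0 : t = 0 := by
        rcases mul_eq_zero.1 h0 with h' | h'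
        · exact h'
        · exact absurd h' hy
      rcases lt_or_gt_of_ne hy with hy' | hy'
      · exact Or.inr ⟨hy', ht0.ge⟩
      · exact Or.inl ⟨hy', ht0.le⟩
  · rintro (⟨hy, htle⟩ | ⟨hy, htle⟩)
    · rcases lt_or_eq_of_le htle with htlt | hteq
      · exact Or.inl (mul_neg_of_neg_of_pos htlt hy)
      · exact Or.inr ⟨by rw [hteq, zero_mul], hre_t0 hy.ne' hteq⟩
    · rcases lt_or_eq_of_le htle with htlt | hteq
      · exact Or.inl (mul_neg_of_pos_of_neg htlt hy)
      · exact Or.inr ⟨by rw [← hteq, zero_mul], hre_t0 hy.ne hteq.symm⟩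


lemma bridge (β : ℂ) (hb : ‖β‖ < 1) :
    ((Ksq β).im < 0 ∨ ((Ksq β).im = 0 ∧ (Ksq β).re < 0)) ↔
    ((0 < β.im ∧ 1 ≤ ‖β - 1‖) ∨ (β.im < 0 ∧ ‖β - 1‖ ≤ 1)) := by
  have hne : β ≠ 1 := by rintro rfl; simp at hb
  obtain ⟨him, hre⟩ := Ksq_im_re β hne
  have hC : 0 < 4 * Complex.normSq (1 - β) := by
    have := Complex.normSq_pos.2 (sub_ne_zero.2 (Ne.symm hne)); linarith
  have hb2 : β.re ^ 2 + β.im ^ 2 < 1 := by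
    have h1 : Complex.normSq β < 1 := by
      rw [← Complex.sq_norm]; nlinarith [norm_nonneg β]
    rw [Complex.normSq_apply] at h1; nlinarith
  have h1 : (Ksq β).im < 0 ↔ (2 * β.re - β.re ^ 2 - β.im ^ 2) * β.im < 0 := by
    rw [him, div_lt_iff₀ hC, zero_mul]
  have h2 : (Ksq β).im = 0 ↔ (2 * β.re - β.re ^ 2 - β.im ^ 2) * β.im = 0 := by
    rw [him, div_eq_zero_iff]; simp [hC.ne']
  have h3 : (Ksq β).re < 0 ↔
      (β.re ^ 2 - β.im ^ 2) * (1 - β.re) - 2 * β.re * β.im ^ 2 < 0 := by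
    rw [hre, div_lt_iff₀ hC, zero_mul]
  have habs : Complex.normSq (β - 1) = 1 - (2 * β.re - β.re ^ 2 - β.im ^ 2) := by
    rw [Complex.normSq_apply]; simp [Complex.sub_re, Complex.sub_im]; ring
  have hiff : (1 : ℝ) ≤ Complex.normSq (β - 1) ↔ 1 ≤ ‖β - 1‖ := by
    constructor
    · intro h; nlinarith [norm_nonneg (β - 1), Complex.sq_norm (β - 1)]
    · intro h; nlinarith [Complex.sq_norm (β - 1)]
  have hiff' : Complex.normSq (β - 1) ≤ 1 ↔ ‖β - 1‖ ≤ 1 := by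
    constructor
    · intro h; nlinarith [norm_nonneg (β - 1), Complex.sq_norm (β - 1)]
    · intro h; nlinarith [norm_nonneg (β - 1), Complex.sq_norm (β - 1)]
  have h4 : 1 ≤ ‖β - 1‖ ↔ 2 * β.re - β.re ^ 2 - β.im ^ 2 ≤ 0 := by
    rw [← hiff, habs]; constructor <;> intro <;> linarith
  have h5 : ‖β - 1‖ ≤ 1 ↔ 0 ≤ 2 * β.re - β.re ^ 2 - β.im ^ 2 := by
    rw [← hiff', habs]; constructor <;> intro <;> linarith
  rw [h1, h2, h3, h4, h5]
  exact real_key β.re β.im hb2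

theorem limit_set_admissibleZone_bot (β : ℂ) :
    (∃ R : ℝ, ∀ r : ℝ, r ≤ R → β ∈ admissibleZone r) ↔
    β ∈ Metric.ball (0 : ℂ) 1 ∩
      (({z : ℂ | 0 < z.im} \ Metric.ball (1 : ℂ) 1) ∪
       ({z : ℂ | z.im < 0} ∩ Metric.closedBall (1 : ℂ) 1)) := by
  have hmem : β ∈ Metric.ball (0 : ℂ) 1 ∩
      (({z : ℂ | 0 < z.im} \ Metric.ball (1 : ℂ) 1) ∪
       ({z : ℂ | z.im < 0} ∩ Metric.closedBall (1 : ℂ) 1)) ↔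
      ‖β‖ < 1 ∧ ((0 < β.im ∧ 1 ≤ ‖β - 1‖) ∨
        (β.im < 0 ∧ ‖β - 1‖ ≤ 1)) := by
    simp [Metric.mem_ball, Metric.mem_closedBall, Complex.dist_eq, Set.mem_inter_iff,
      Set.mem_diff, Set.mem_union, Set.mem_setOf_eq, not_lt]
  rw [hmem]
  have hzone : (∃ R : ℝ, ∀ r : ℝ, r ≤ R → β ∈ admissibleZone r) ↔
      ‖β‖ < 1 ∧
        ((Ksq β).im < 0 ∨ ((Ksq β).im = 0 ∧ (Ksq β).re < 0)) := by
    constructor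
    · rintro ⟨R, hR⟩
      refine ⟨(hR R le_rfl).1, ?_⟩
      exact (aux_exists_iff _ _).1 ⟨R, fun r hr => (hR r hr).2⟩
    · rintro ⟨hb, hK⟩
      obtain ⟨R, hR⟩ := (aux_exists_iff ((Ksq β).re) ((Ksq β).im)).2 hK
      exact ⟨R, fun r hr => ⟨hb, hR r hr⟩⟩
  rw [hzone]
  constructor
  · rintro ⟨hb, hK⟩
    exact ⟨hb, (bridge β hb).1 hK⟩
  · rintro ⟨hb, hgeo⟩
    exact ⟨hb, (bridge β hb).2 hgeo⟩
end
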